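/- arXiv:2206.09808 — 4 statements merged into one kernel-verified Lean document; each statement's English description precedes it below -/
import Mathlib

section
/- For every vertex x of the infinite hexagonal grid T_H and every integer k ≥ 1, the number of vertices at graph distance exactly k from x is 3k. -/
/-- The infinite hexagonal grid `T_H` on vertex set ℤ×ℤ: `(i,j)` is adjacent to `(i,j±1)`, and
`(i,j)` is adjacent to `(i+1,j)` iff `i+j` is even. -/
def TH : SimpleGraph (ℤ × ℤ) where
  Adj u v :=
    (u.1 = v.1 ∧ (v.2 = u.2 + 1 ∨ u.2 = v.2 + 1)) ∨
    (u.2 = v.2 ∧ ((v.1 = u.1 + 1 ∧ (u.1 + u.2) % 2 = 0) ∨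
                  (u.1 = v.1 + 1 ∧ (v.1 + v.2) % 2 = 0)))
  symm := by
    constructor
    intro u v h
    omega
  loopless := by
    constructor
    intro u h
    omega

/-- An `l`-distance coloring of `T_H`. -/
def IsDistColoring (l : ℕ) (f : ℤ × ℤ → ℕ) : Prop :=
  ∀ u v : ℤ × ℤ, u ≠ v → TH.dist u v ≤ l → f u ≠ f v

/-- The six corner vertices of `F_{x,k}` for a right vertex `x`. -/
def corners (x : ℤ × ℤ) (k : ℕ) : Set (ℤ × ℤ) :=
  {(x.1, x.2 + (k : ℤ)), (x.1 + ((k+1)/2 : ℕ), x.2 + (k/2 : ℕ)),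
   (x.1 + ((k+1)/2 : ℕ), x.2 - (k/2 : ℕ)), (x.1, x.2 - (k : ℤ)),
   (x.1 - (k/2 : ℕ), x.2 - ((k+1)/2 : ℕ)), (x.1 - (k/2 : ℕ), x.2 + ((k+1)/2 : ℕ))}

/-- `S_{x,k}^{2h}`: non-corner vertices of `F_{x,k}` at distance exactly `2h`
from some corner vertex of `F_{x,k}`. -/
def Sset (x : ℤ × ℤ) (k h : ℕ) : Set (ℤ × ℤ) :=
  {v | TH.dist x v = k ∧ v ∉ corners x k ∧ ∃ u ∈ corners x k, TH.dist v u = 2 * h}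

/-! ### Auxiliary machinery: an explicit distance formula for `T_H`. -/

/-- The distance formula in relative coordinates, assuming the source is a "right" vertex
(i.e. with even coordinate sum). -/
def E (a b : ℤ) : ℕ :=
  max (a.natAbs + b.natAbs) (max (2*a - (a+b)%2).toNat ((a+b)%2 - 2*a).toNat)

/-- The candidate distance function on `T_H`. -/
def D (x u : ℤ × ℤ) : ℕ :=
  if (x.1 + x.2) % 2 = 0 then E (u.1 - x.1) (u.2 - x.2) else E (x.1 - u.1) (u.2 - x.2)

lemma adj_iff {u v : ℤ × ℤ} : TH.Adj u v ↔
    (u.1 = v.1 ∧ (v.2 = u.2 + 1 ∨ u.2 = v.2 + 1)) ∨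
    (u.2 = v.2 ∧ ((v.1 = u.1 + 1 ∧ (u.1 + u.2) % 2 = 0) ∨
                  (u.1 = v.1 + 1 ∧ (v.1 + v.2) % 2 = 0))) := Iff.rfl

lemma E_congr {a b a' b' : ℤ} (h1 : a = a') (h2 : b = b') : E a b = E a' b' := by rw [h1, h2]

lemma L1u (a b : ℤ) : E a b ≤ E (-a) (b+1) + 1 := by simp only [E]; omega
lemma L1d (a b : ℤ) : E a b ≤ E (-a) (b-1) + 1 := by simp only [E]; omega
lemma L2 (a b : ℤ) : E a b ≤ E (1-a) b + 1 := by simp only [E]; omega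

lemma E_lip {a b a' b' : ℤ}
    (h : (a' = -a ∧ (b' = b - 1 ∨ b' = b + 1)) ∨ (a' = 1 - a ∧ b' = b)) :
    E a b ≤ E a' b' + 1 := by
  rcases h with ⟨ha, hb | hb⟩ | ⟨ha, hb⟩ <;> subst ha <;> subst hb
  · exact L1d _ _
  · exact L1u _ _
  · exact L2 _ _

lemma D_self (x : ℤ × ℤ) : D x x = 0 := by
  simp only [D, E]; split_ifs <;> omega

lemma eq_of_D_zero {x u : ℤ × ℤ} (h : D x u = 0) : u = x := by
  simp only [D, E] at h
  have : u.1 = x.1 ∧ u.2 = x.2 := by split_ifs at h <;> omega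
  exact Prod.ext this.1 this.2

lemma D_lip {x y u : ℤ × ℤ} (h : TH.Adj x y) : D x u ≤ D y u + 1 := by
  rw [adj_iff] at h
  simp only [D]
  split_ifs with h1 h2 h3
  · exfalso; omega
  · exact E_lip (by omega)
  · exact E_lip (by omega)
  · exfalso; omega

set_option maxHeartbeats 1000000 in
lemma stepE (a b : ℤ) (h : 1 ≤ E a b) :
    (E a (b+1) + 1 = E a b) ∨ (E a (b-1) + 1 = E a b) ∨
    ((a+b)%2 = 0 ∧ E (a+1) b + 1 = E a b) ∨ ((a+b)%2 = 1 ∧ E (a-1) b + 1 = E a b) := by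
  rcases Int.emod_two_eq (a+b) with hq | hq
  · by_cases h1 : a ≤ 0 ∧ (a.natAbs + b.natAbs : ℤ) ≤ -2*a
    · refine Or.inr (Or.inr (Or.inl ⟨hq, ?_⟩)); simp only [E] at *; omega
    · by_cases h2 : 1 ≤ a ∧ (a.natAbs + b.natAbs : ℤ) < 2*a
      · refine Or.inr (Or.inl ?_); simp only [E] at *; omega
      · rcases le_or_gt b 0 with hb | hb
        · refine Or.inl ?_; simp only [E] at *; omega
        · refine Or.inr (Or.inl ?_); simp only [E] at *; omega
  · by_cases h1 : 1 ≤ a ∧ (a.natAbs + b.natAbs : ℤ) ≤ 2*a - 1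
    · refine Or.inr (Or.inr (Or.inr ⟨hq, ?_⟩)); simp only [E] at *; omega
    · rcases le_or_gt b 0 with hb | hb
      · refine Or.inl ?_; simp only [E] at *; omega
      · refine Or.inr (Or.inl ?_); simp only [E] at *; omega

lemma D_step {x u : ℤ × ℤ} (h : 1 ≤ D x u) :
    ∃ v, TH.Adj u v ∧ D x v + 1 = D x u := by
  by_cases h1 : (x.1 + x.2) % 2 = 0
  · rw [show D x u = E (u.1 - x.1) (u.2 - x.2) from if_pos h1] at h
    rcases stepE (u.1 - x.1) (u.2 - x.2) h with h' | h' | ⟨hq, h'⟩ | ⟨hq, h'⟩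
    · refine ⟨(u.1, u.2 + 1), by rw [adj_iff]; exact Or.inl ⟨rfl, Or.inl rfl⟩, ?_⟩
      rw [show D x (u.1, u.2+1) = E (u.1 - x.1) (u.2 + 1 - x.2) from if_pos h1,
        E_congr rfl (show u.2 + 1 - x.2 = u.2 - x.2 + 1 by ring),
        show D x u = E (u.1 - x.1) (u.2 - x.2) from if_pos h1]
      exact h'
    · refine ⟨(u.1, u.2 - 1), by rw [adj_iff]; exact Or.inl ⟨rfl, Or.inr (by show u.2 = u.2 - 1 + 1; ring)⟩, ?_⟩
      rw [show D x (u.1, u.2-1) = E (u.1 - x.1) (u.2 - 1 - x.2) from if_pos h1,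
        E_congr rfl (show u.2 - 1 - x.2 = u.2 - x.2 - 1 by ring),
        show D x u = E (u.1 - x.1) (u.2 - x.2) from if_pos h1]
      exact h'
    · refine ⟨(u.1 + 1, u.2), by rw [adj_iff]; exact Or.inr ⟨rfl, Or.inl ⟨rfl, by omega⟩⟩, ?_⟩
      rw [show D x (u.1+1, u.2) = E (u.1 + 1 - x.1) (u.2 - x.2) from if_pos h1,
        E_congr (show u.1 + 1 - x.1 = u.1 - x.1 + 1 by ring) rfl,
        show D x u = E (u.1 - x.1) (u.2 - x.2) from if_pos h1]
      exact h'
    · refine ⟨(u.1 - 1, u.2), by rw [adj_iff]; exact Or.inr ⟨rfl, Or.inr ⟨by show u.1 = u.1 - 1 + 1; ring, by show (u.1 - 1 + u.2) % 2 = 0; omega⟩⟩, ?_⟩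
      rw [show D x (u.1-1, u.2) = E (u.1 - 1 - x.1) (u.2 - x.2) from if_pos h1,
        E_congr (show u.1 - 1 - x.1 = u.1 - x.1 - 1 by ring) rfl,
        show D x u = E (u.1 - x.1) (u.2 - x.2) from if_pos h1]
      exact h'
  · rw [show D x u = E (x.1 - u.1) (u.2 - x.2) from if_neg h1] at h
    rcases stepE (x.1 - u.1) (u.2 - x.2) h with h' | h' | ⟨hq, h'⟩ | ⟨hq, h'⟩
    · refine ⟨(u.1, u.2 + 1), by rw [adj_iff]; exact Or.inl ⟨rfl, Or.inl rfl⟩, ?_⟩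
      rw [show D x (u.1, u.2+1) = E (x.1 - u.1) (u.2 + 1 - x.2) from if_neg h1,
        E_congr rfl (show u.2 + 1 - x.2 = u.2 - x.2 + 1 by ring),
        show D x u = E (x.1 - u.1) (u.2 - x.2) from if_neg h1]
      exact h'
    · refine ⟨(u.1, u.2 - 1), by rw [adj_iff]; exact Or.inl ⟨rfl, Or.inr (by show u.2 = u.2 - 1 + 1; ring)⟩, ?_⟩
      rw [show D x (u.1, u.2-1) = E (x.1 - u.1) (u.2 - 1 - x.2) from if_neg h1,
        E_congr rfl (show u.2 - 1 - x.2 = u.2 - x.2 - 1 by ring),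
        show D x u = E (x.1 - u.1) (u.2 - x.2) from if_neg h1]
      exact h'
    · refine ⟨(u.1 - 1, u.2), by rw [adj_iff]; exact Or.inr ⟨rfl, Or.inr ⟨by show u.1 = u.1 - 1 + 1; ring, by show (u.1 - 1 + u.2) % 2 = 0; omega⟩⟩, ?_⟩
      rw [show D x (u.1-1, u.2) = E (x.1 - (u.1 - 1)) (u.2 - x.2) from if_neg h1,
        E_congr (show x.1 - (u.1 - 1) = x.1 - u.1 + 1 by ring) rfl,
        show D x u = E (x.1 - u.1) (u.2 - x.2) from if_neg h1]
      exact h'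
    · refine ⟨(u.1 + 1, u.2), by rw [adj_iff]; exact Or.inr ⟨rfl, Or.inl ⟨rfl, by omega⟩⟩, ?_⟩
      rw [show D x (u.1+1, u.2) = E (x.1 - (u.1 + 1)) (u.2 - x.2) from if_neg h1,
        E_congr (show x.1 - (u.1 + 1) = x.1 - u.1 - 1 by ring) rfl,
        show D x u = E (x.1 - u.1) (u.2 - x.2) from if_neg h1]
      exact h'

lemma exists_walk (x : ℤ × ℤ) : ∀ (n : ℕ) (u : ℤ × ℤ), D x u = n →
    ∃ w : TH.Walk x u, w.length = n := by
  intro n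
  induction n using Nat.strong_induction_on with
  | _ n ih =>
    intro u h
    rcases Nat.eq_zero_or_pos n with rfl | hn
    · have : u = x := eq_of_D_zero h
      subst this
      exact ⟨SimpleGraph.Walk.nil, rfl⟩
    · have h1 : 1 ≤ D x u := by omega
      obtain ⟨v, hadj, hD⟩ := D_step h1
      obtain ⟨w, hw⟩ := ih (n - 1) (by omega) v (by omega)
      exact ⟨w.concat hadj.symm, by rw [SimpleGraph.Walk.length_concat]; omega⟩

lemma walk_le {x u : ℤ × ℤ} (w : TH.Walk x u) : D x u ≤ w.length := by
  induction w with
  | nil => simp [D_self]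
  | cons h p ih =>
    rw [SimpleGraph.Walk.length_cons]
    exact le_trans (D_lip h) (by omega)

lemma dist_eq_D (x u : ℤ × ℤ) : TH.dist x u = D x u := by
  obtain ⟨w, hw⟩ := exists_walk x (D x u) u rfl
  have h1 : TH.dist x u ≤ D x u := hw ▸ SimpleGraph.dist_le w
  obtain ⟨w', hw'⟩ := SimpleGraph.Reachable.exists_walk_length_eq_dist ⟨w⟩
  have h2 : D x u ≤ TH.dist x u := hw' ▸ walk_le w'
  omega

/-! ### Counting the sphere. -/

set_option maxHeartbeats 1000000 in
lemma E_char (k : ℕ) (hk : 1 ≤ k) (a b : ℤ) :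
    E a b = k ↔
      (a = ((k:ℤ)+1)/2 ∧ -((k:ℤ)/2) ≤ b ∧ b ≤ (k:ℤ)/2 ∧ (b - (k:ℤ)/2) % 2 = 0) ∨
      (a = -((k:ℤ)/2) ∧ -(((k:ℤ)+1)/2) ≤ b ∧ b ≤ ((k:ℤ)+1)/2 ∧ (b - ((k:ℤ)+1)/2) % 2 = 0) ∨
      (-((k:ℤ)/2) < a ∧ a < ((k:ℤ)+1)/2 ∧ (b = (k:ℤ) - a.natAbs ∨ b = (a.natAbs : ℤ) - k)) := by
  simp only [E]
  omega

/-- The hexagonal sphere of radius `k` (in relative coordinates), as a finset. -/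
noncomputable def hexF (k : ℕ) : Finset (ℤ × ℤ) :=
  ((Finset.Icc (0:ℤ) ((k:ℤ)/2)).image fun j => (((k:ℤ)+1)/2, (k:ℤ)/2 - 2*j)) ∪
  ((Finset.Icc (0:ℤ) (((k:ℤ)+1)/2)).image fun j => (-((k:ℤ)/2), ((k:ℤ)+1)/2 - 2*j)) ∪
  ((Finset.Ioo (-((k:ℤ)/2)) (((k:ℤ)+1)/2)).image fun a => (a, (k:ℤ) - a.natAbs)) ∪
  ((Finset.Ioo (-((k:ℤ)/2)) (((k:ℤ)+1)/2)).image fun a => (a, (a.natAbs : ℤ) - k))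

lemma mem_hexF (k : ℕ) (hk : 1 ≤ k) (p : ℤ × ℤ) :
    p ∈ hexF k ↔ E p.1 p.2 = k := by
  rw [E_char k hk]
  simp only [hexF, Finset.mem_union, Finset.mem_image, Finset.mem_Icc, Finset.mem_Ioo,
    Prod.mk.injEq, Prod.ext_iff]
  constructor
  · rintro (((⟨j, hj, h1, h2⟩ | ⟨j, hj, h1, h2⟩) | ⟨a, ha, h1, h2⟩) | ⟨a, ha, h1, h2⟩)
    · exact Or.inl ⟨h1.symm, by omega⟩
    · exact Or.inr (Or.inl ⟨h1.symm, by omega⟩)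
    · exact Or.inr (Or.inr ⟨by omega, by omega, Or.inl (by omega)⟩)
    · exact Or.inr (Or.inr ⟨by omega, by omega, Or.inr (by omega)⟩)
  · rintro (⟨h1, h2, h3, h4⟩ | ⟨h1, h2, h3, h4⟩ | ⟨h1, h2, h3 | h3⟩)
    · exact Or.inl (Or.inl (Or.inl ⟨((k:ℤ)/2 - p.2)/2, by omega, by omega, by omega⟩))
    · exact Or.inl (Or.inl (Or.inr ⟨(((k:ℤ)+1)/2 - p.2)/2, by omega, by omega, by omega⟩))
    · exact Or.inl (Or.inr ⟨p.1, ⟨h1, h2⟩, rfl, by omega⟩)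
    · exact Or.inr ⟨p.1, ⟨h1, h2⟩, rfl, by omega⟩

lemma card_hexF (k : ℕ) (hk : 1 ≤ k) : (hexF k).card = 3 * k := by
  have hA : (1:ℤ) ≤ ((k:ℤ)+1)/2 := by omega
  have hB : (0:ℤ) ≤ (k:ℤ)/2 := by omega
  rw [hexF]
  rw [Finset.card_union_of_disjoint, Finset.card_union_of_disjoint,
    Finset.card_union_of_disjoint]
  · rw [Finset.card_image_of_injective _ (fun a b hab => by
        simp only [Prod.mk.injEq] at hab; omega),
      Finset.card_image_of_injective _ (fun a b hab => by
        simp only [Prod.mk.injEq] at hab; omega),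
      Finset.card_image_of_injective _ (fun a b hab => by
        simp only [Prod.mk.injEq] at hab; omega),
      Finset.card_image_of_injective _ (fun a b hab => by
        simp only [Prod.mk.injEq] at hab; omega),
      Int.card_Icc, Int.card_Icc, Int.card_Ioo]
    omega
  · rw [Finset.disjoint_left]
    rintro ⟨p1, p2⟩ hp hq
    simp only [Finset.mem_image, Finset.mem_Icc, Prod.mk.injEq] at hp hq
    obtain ⟨j, hj, h1, h2⟩ := hp
    obtain ⟨i, hi, h3, h4⟩ := hq
    omega
  · rw [Finset.disjoint_left]
    rintro ⟨p1, p2⟩ hp hq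
    simp only [Finset.mem_union, Finset.mem_image, Finset.mem_Icc, Finset.mem_Ioo,
      Prod.mk.injEq] at hp hq
    obtain ⟨a, ha, h3, h4⟩ := hq
    rcases hp with ⟨j, hj, h1, h2⟩ | ⟨j, hj, h1, h2⟩ <;> omega
  · rw [Finset.disjoint_left]
    rintro ⟨p1, p2⟩ hp hq
    simp only [Finset.mem_union, Finset.mem_image, Finset.mem_Icc, Finset.mem_Ioo,
      Prod.mk.injEq] at hp hq
    obtain ⟨a, ha, h3, h4⟩ := hq
    rcases hp with (⟨j, hj, h1, h2⟩ | ⟨j, hj, h1, h2⟩) | ⟨j, hj, h1, h2⟩ <;> omega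

/-- For every vertex `x` of `T_H` and every `k ≥ 1`, there are exactly `3k` vertices at
graph distance exactly `k` from `x`. -/
theorem card_sphere (x : ℤ × ℤ) (k : ℕ) (hk : 1 ≤ k) :
    {u : ℤ × ℤ | TH.dist x u = k}.encard = ((3 * k : ℕ) : ℕ∞) := by
  have hT : ({p : ℤ × ℤ | E p.1 p.2 = k} : Set (ℤ × ℤ)).encard = ((3 * k : ℕ) : ℕ∞) := by
    have : {p : ℤ × ℤ | E p.1 p.2 = k} = (↑(hexF k) : Set (ℤ × ℤ)) := by
      ext p
      simp only [Set.mem_setOf_eq, Finset.coe_sort_coe, Finset.mem_coe]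
      exact (mem_hexF k hk p).symm
    rw [this, Set.encard_coe_eq_coe_finsetCard, card_hexF k hk]
  by_cases hx : (x.1 + x.2) % 2 = 0
  · have hset : {u : ℤ × ℤ | TH.dist x u = k} =
        (fun p : ℤ × ℤ => (x.1 + p.1, x.2 + p.2)) '' {p : ℤ × ℤ | E p.1 p.2 = k} := by
      ext u
      simp only [Set.mem_setOf_eq, Set.mem_image]
      constructor
      · intro h
        rw [dist_eq_D, show D x u = E (u.1 - x.1) (u.2 - x.2) from if_pos hx] at h
        refine ⟨(u.1 - x.1, u.2 - x.2), h, ?_⟩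
        show (x.1 + (u.1 - x.1), x.2 + (u.2 - x.2)) = u
        rw [Prod.ext_iff]
        constructor <;> (show _ = _; ring)
      · rintro ⟨p, hp, rfl⟩
        rw [dist_eq_D, show D x (x.1 + p.1, x.2 + p.2)
            = E (x.1 + p.1 - x.1) (x.2 + p.2 - x.2) from if_pos hx,
          E_congr (show x.1 + p.1 - x.1 = p.1 by ring) (show x.2 + p.2 - x.2 = p.2 by ring)]
        exact hp
    rw [hset, Set.InjOn.encard_image, hT]
    rintro ⟨p1, p2⟩ - ⟨q1, q2⟩ - hpq
    simp only [Prod.mk.injEq] at hpq ⊢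
    omega
  · have hset : {u : ℤ × ℤ | TH.dist x u = k} =
        (fun p : ℤ × ℤ => (x.1 - p.1, x.2 + p.2)) '' {p : ℤ × ℤ | E p.1 p.2 = k} := by
      ext u
      simp only [Set.mem_setOf_eq, Set.mem_image]
      constructor
      · intro h
        rw [dist_eq_D, show D x u = E (x.1 - u.1) (u.2 - x.2) from if_neg hx] at h
        refine ⟨(x.1 - u.1, u.2 - x.2), h, ?_⟩
        show (x.1 - (x.1 - u.1), x.2 + (u.2 - x.2)) = u
        rw [Prod.ext_iff]
        constructor <;> (show _ = _; ring)
      · rintro ⟨p, hp, rfl⟩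
        rw [dist_eq_D, show D x (x.1 - p.1, x.2 + p.2)
            = E (x.1 - (x.1 - p.1)) (x.2 + p.2 - x.2) from if_neg hx,
          E_congr (show x.1 - (x.1 - p.1) = p.1 by ring) (show x.2 + p.2 - x.2 = p.2 by ring)]
        exact hp
    rw [hset, Set.InjOn.encard_image, hT]
    rintro ⟨p1, p2⟩ - ⟨q1, q2⟩ - hpq
    simp only [Prod.mk.injEq] at hpq ⊢
    omega
end

section
/- For every vertex x of the infinite hexagonal grid T_H and every integer p ≥ 0, the closed ball B(x,p) = {u : d(x,u) ≤ p} contains exactly 1 + 3p(p+1)/2 vertices. -/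
/-! ### Auxiliary development: an explicit distance formula for `TH` -/

lemma TH_adj_iff (u v : ℤ × ℤ) : TH.Adj u v ↔
    ((u.1 = v.1 ∧ (v.2 = u.2 + 1 ∨ u.2 = v.2 + 1)) ∨
    (u.2 = v.2 ∧ ((v.1 = u.1 + 1 ∧ (u.1 + u.2) % 2 = 0) ∨
                  (u.1 = v.1 + 1 ∧ (v.1 + v.2) % 2 = 0)))) := Iff.rfl

/-- the "hard direction" penalty -/
def hexT (u : ℤ × ℤ) (a : ℤ) : ℤ :=
  if (0 < a ∧ (u.1 + u.2) % 2 = 1) ∨ (a < 0 ∧ (u.1 + u.2) % 2 = 0) then 1 else 0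

/-- explicit distance formula for `TH` -/
def hexD (u v : ℤ × ℤ) : ℤ :=
  max (((v.1 - u.1).natAbs : ℤ) + ((v.2 - u.2).natAbs : ℤ))
      (2 * ((v.1 - u.1).natAbs : ℤ) + hexT u (v.1 - u.1)
        - (((v.1 - u.1).natAbs : ℤ) + ((v.2 - u.2).natAbs : ℤ) + hexT u (v.1 - u.1)) % 2)

lemma hexD_nonneg (u v : ℤ × ℤ) : 0 ≤ hexD u v := by
  unfold hexD hexT; split_ifs <;> omega

lemma hexD_self (u : ℤ × ℤ) : hexD u u = 0 := by
  unfold hexD hexT; split_ifs <;> omega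

lemma hexD_eq_zero {u v : ℤ × ℤ} (h : hexD u v = 0) : u = v := by
  have h2 : u.1 = v.1 ∧ u.2 = v.2 := by
    unfold hexD hexT at h
    split_ifs at h <;> omega
  exact Prod.ext h2.1 h2.2

set_option maxHeartbeats 1000000 in
lemma hexD_lipschitz {u w : ℤ × ℤ} (v : ℤ × ℤ) (h : TH.Adj u w) :
    hexD u v ≤ hexD w v + 1 := by
  rw [TH_adj_iff] at h
  obtain ⟨u1, u2⟩ := u
  obtain ⟨w1, w2⟩ := w
  obtain ⟨v1, v2⟩ := v
  simp only [hexD, hexT] at *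
  rcases h with ⟨h1, h2 | h2⟩ | ⟨h1, ⟨h2, h3⟩ | ⟨h2, h3⟩⟩ <;>
    split_ifs <;> omega

set_option maxHeartbeats 1000000 in
lemma hexD_step {u v : ℤ × ℤ} (h : 0 < hexD u v) :
    ∃ w, TH.Adj u w ∧ hexD w v + 1 = hexD u v := by
  obtain ⟨u1, u2⟩ := u
  obtain ⟨v1, v2⟩ := v
  by_cases hr : u1 < v1 ∧ (u1 + u2) % 2 = 0
  · refine ⟨(u1 + 1, u2), ?_, ?_⟩
    · rw [TH_adj_iff]; dsimp only; omega
    · simp only [hexD, hexT] at h ⊢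
      split_ifs at h ⊢ <;> omega
  · by_cases hl : v1 < u1 ∧ (u1 + u2) % 2 = 1
    · refine ⟨(u1 - 1, u2), ?_, ?_⟩
      · rw [TH_adj_iff]; dsimp only; omega
      · simp only [hexD, hexT] at h ⊢
        split_ifs at h ⊢ <;> omega
    · by_cases hv : u2 < v2
      · refine ⟨(u1, u2 + 1), ?_, ?_⟩
        · rw [TH_adj_iff]; dsimp only; omega
        · simp only [hexD, hexT] at h ⊢
          split_ifs at h ⊢ <;> omega
      · refine ⟨(u1, u2 - 1), ?_, ?_⟩
        · rw [TH_adj_iff]; dsimp only; omega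
        · simp only [hexD, hexT] at h ⊢
          split_ifs at h ⊢ <;> omega

lemma hexD_le_walk {u v : ℤ × ℤ} (w : TH.Walk u v) : hexD u v ≤ w.length := by
  induction w with
  | nil => rw [hexD_self]; simp
  | @cons a b c hadj p ih =>
      have h1 := hexD_lipschitz c hadj
      simp only [SimpleGraph.Walk.length_cons]
      push_cast
      omega

lemma exists_walk_hexD : ∀ n : ℕ, ∀ u v : ℤ × ℤ, hexD u v ≤ n →
    ∃ w : TH.Walk u v, w.length ≤ n := by
  intro n
  induction n with
  | zero =>
      intro u v h
      have h0 : hexD u v = 0 := le_antisymm h (hexD_nonneg u v)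
      obtain rfl := hexD_eq_zero h0
      exact ⟨.nil, le_rfl⟩
  | succ n ih =>
      intro u v h
      by_cases h0 : hexD u v ≤ n
      · obtain ⟨w, hw⟩ := ih u v h0
        exact ⟨w, hw.trans (by omega)⟩
      · have hpos : 0 < hexD u v := by have := hexD_nonneg u v; omega
        obtain ⟨w, hadj, hd⟩ := hexD_step hpos
        obtain ⟨q, hq⟩ := ih w v (by omega)
        refine ⟨.cons hadj q, ?_⟩
        simp only [SimpleGraph.Walk.length_cons]
        omega

lemma TH_dist_eq (u v : ℤ × ℤ) : (TH.dist u v : ℤ) = hexD u v := by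
  have hnn := hexD_nonneg u v
  obtain ⟨w, hw⟩ := exists_walk_hexD (hexD u v).toNat u v (by omega)
  have h1 : TH.dist u v ≤ (hexD u v).toNat := le_trans (SimpleGraph.dist_le w) hw
  have hr : TH.Reachable u v := ⟨w⟩
  obtain ⟨p, hp⟩ := hr.exists_walk_length_eq_dist
  have h2 : hexD u v ≤ (TH.dist u v : ℤ) := by
    have := hexD_le_walk p
    omega
  omega

/-! ### counting the ball of `hexD 0` -/

/-- the ball of radius `p` around the origin, as a `Finset` -/
noncomputable def ballF (p : ℕ) : Finset (ℤ × ℤ) :=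
  (Finset.Icc (-(p:ℤ)) p ×ˢ Finset.Icc (-(p:ℤ)) p).filter (fun v => hexD 0 v ≤ (p:ℤ))

/-- number of elements in column `i` of the ball of radius `p` -/
def colN (p : ℕ) (i : ℤ) : ℕ :=
  if 2 * (i.natAbs : ℤ) + (if i < 0 then 1 else 0) ≤ (p:ℤ) then (2 * ((p:ℤ) - i.natAbs) + 1).toNat
  else if 2 * (i.natAbs : ℤ) + (if i < 0 then 1 else 0) = (p:ℤ) + 1 then (i.natAbs + (if i < 0 then 1 else 0) : ℤ).toNat
  else 0

lemma ball0_eq (p : ℕ) : {v : ℤ × ℤ | hexD 0 v ≤ (p:ℤ)} = ↑(ballF p) := by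
  ext ⟨a, b⟩
  simp only [ballF, Set.mem_setOf_eq, Finset.coe_filter, Finset.mem_product, Finset.mem_Icc]
  constructor
  · intro h
    refine ⟨?_, h⟩
    simp only [hexD, hexT, Prod.fst_zero, Prod.snd_zero] at h
    split_ifs at h <;> omega
  · exact fun h => h.2

/-- the parity-filtered interval: its cardinality -/
lemma parity_Icc_card (lo hi : ℤ) (h : lo ≤ hi) :
    ((Finset.Icc lo hi).filter (fun j => (j - lo) % 2 = 0)).card = ((hi - lo) / 2 + 1).toNat := by
  have himg : (Finset.Icc lo hi).filter (fun j => (j - lo) % 2 = 0)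
      = (Finset.Icc (0:ℤ) ((hi - lo) / 2)).image (fun k => lo + 2 * k) := by
    ext j
    simp only [Finset.mem_filter, Finset.mem_Icc, Finset.mem_image]
    constructor
    · rintro ⟨⟨h1, h2⟩, h3⟩
      exact ⟨(j - lo) / 2, by omega, by omega⟩
    · rintro ⟨k, hk, rfl⟩
      omega
  rw [himg, Finset.card_image_of_injective _ (fun a b hab => by omega), Int.card_Icc]
  omega

lemma col_card (p : ℕ) (i : ℤ) :
    ((ballF p).filter (fun v => v.1 = i)).card = colN p i := by
  set A : ℤ := (i.natAbs : ℤ) with hA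
  set t : ℤ := if i < 0 then 1 else 0 with ht
  have htcases : (i < 0 ∧ t = 1) ∨ (0 ≤ i ∧ t = 0) := by
    rw [ht]; split_ifs with h <;> omega
  by_cases hfull : 2 * A + t ≤ (p:ℤ)
  · have hcol : (ballF p).filter (fun v => v.1 = i)
        = {i} ×ˢ Finset.Icc (A - p) ((p:ℤ) - A) := by
      ext ⟨c, j⟩
      simp only [ballF, Finset.mem_filter, Finset.mem_product, Finset.mem_Icc,
        Finset.mem_singleton]
      constructor
      · rintro ⟨⟨hbox, hd⟩, rfl⟩
        refine ⟨rfl, ?_⟩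
        simp only [hexD, hexT, Prod.fst_zero, Prod.snd_zero] at hd
        split_ifs at hd <;> omega
      · rintro ⟨rfl, hj⟩
        refine ⟨⟨⟨by omega, ?_⟩, ?_⟩, rfl⟩
        · omega
        · simp only [hexD, hexT, Prod.fst_zero, Prod.snd_zero]
          split_ifs <;> omega
    rw [hcol, Finset.card_product, Finset.card_singleton, one_mul, Int.card_Icc]
    rw [colN]
    split_ifs <;> omega
  · by_cases hbd : 2 * A + t = (p:ℤ) + 1
    · have hcol : (ballF p).filter (fun v => v.1 = i)
          = {i} ×ˢ ((Finset.Icc (A - p) ((p:ℤ) - A)).filter (fun j => (j - (A - p)) % 2 = 0)) := by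
        ext ⟨c, j⟩
        simp only [ballF, Finset.mem_filter, Finset.mem_product, Finset.mem_Icc,
          Finset.mem_singleton]
        constructor
        · rintro ⟨⟨hbox, hd⟩, rfl⟩
          refine ⟨rfl, ?_, ?_⟩
          · simp only [hexD, hexT, Prod.fst_zero, Prod.snd_zero] at hd
            split_ifs at hd <;> omega
          · simp only [hexD, hexT, Prod.fst_zero, Prod.snd_zero] at hd
            split_ifs at hd <;> omega
        · rintro ⟨rfl, hj, hpar⟩
          refine ⟨⟨⟨by omega, by omega⟩, ?_⟩, rfl⟩
          simp only [hexD, hexT, Prod.fst_zero, Prod.snd_zero]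
          split_ifs <;> omega
      rw [hcol, Finset.card_product, Finset.card_singleton, one_mul,
        parity_Icc_card _ _ (by omega)]
      rw [colN]
      split_ifs <;> omega
    · have hcol : (ballF p).filter (fun v => v.1 = i) = ∅ := by
        rw [Finset.filter_eq_empty_iff]
        rintro ⟨c, j⟩ hm rfl
        simp only [ballF, Finset.mem_filter, Finset.mem_product, Finset.mem_Icc] at hm
        obtain ⟨hbox, hd⟩ := hm
        simp only [hexD, hexT, Prod.fst_zero, Prod.snd_zero] at hd
        split_ifs at hd <;> omega
      rw [hcol, Finset.card_empty, colN]
      split_ifs <;> omega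

lemma sum_inc (c n : ℕ) : ∑ a ∈ Finset.range n, (2*(c+a)+1) = n*(2*c+n) := by
  induction n with
  | zero => simp
  | succ n ih => rw [Finset.sum_range_succ, ih]; ring

lemma sum_dec (c n : ℕ) (h : n ≤ c + 1) :
    ∑ a ∈ Finset.range n, (2*(c-a)+1) = n*(2*c+2-n) := by
  rw [← Finset.sum_range_reflect (fun a => 2*(c-a)+1) n]
  have h1 : ∀ a ∈ Finset.range n, 2*(c-(n-1-a))+1 = 2*((c+1-n)+a)+1 := by
    intro a ha
    simp only [Finset.mem_range] at ha
    omega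
  rw [Finset.sum_congr rfl h1, sum_inc]
  congr 1
  omega

lemma colN_pos (p a : ℕ) : colN p (a : ℤ) =
    (if 2*a ≤ p then 2*(p-a)+1 else if 2*a = p+1 then a else 0) := by
  unfold colN
  split_ifs <;> omega

lemma colN_neg (p a : ℕ) : colN p (-((a:ℤ)+1)) =
    (if 2*a+3 ≤ p then 2*((p-1)-a)+1 else if 2*a+2 = p then a+2 else 0) := by
  unfold colN
  split_ifs <;> omega

def posEmb : ℕ ↪ ℤ := ⟨fun k => (k:ℤ), fun a b h => by simpa using h⟩
def negEmb : ℕ ↪ ℤ := ⟨fun k => -((k:ℤ)+1), fun a b h => by simp at h; omega⟩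

lemma posEmb_apply (k : ℕ) : posEmb k = (k:ℤ) := rfl
lemma negEmb_apply (k : ℕ) : negEmb k = -((k:ℤ)+1) := rfl

lemma Icc_pos_eq (p : ℕ) : Finset.Icc (0:ℤ) (p:ℤ) = (Finset.range (p+1)).map posEmb := by
  ext x
  simp only [Finset.mem_Icc, Finset.mem_map, Finset.mem_range, posEmb_apply]
  constructor
  · intro h
    exact ⟨x.toNat, by omega, by omega⟩
  · rintro ⟨a, ha, rfl⟩
    omega

lemma Icc_neg_eq (p : ℕ) : Finset.Icc (-(p:ℤ)) (-1:ℤ) = (Finset.range p).map negEmb := by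
  ext x
  simp only [Finset.mem_Icc, Finset.mem_map, Finset.mem_range, negEmb_apply]
  constructor
  · intro h
    exact ⟨(-x-1).toNat, by omega, by omega⟩
  · rintro ⟨a, ha, rfl⟩
    omega

lemma ballF_card (p : ℕ) : (ballF p).card = 1 + 3*p*(p+1)/2 := by
  have hmem : ∀ v ∈ ballF p, v.1 ∈ Finset.Icc (-(p:ℤ)) (p:ℤ) := by
    intro v hv
    simp only [ballF, Finset.mem_filter, Finset.mem_product] at hv
    exact hv.1.1
  rw [Finset.card_eq_sum_card_fiberwise hmem]
  rw [Finset.sum_congr rfl (fun i _ => col_card p i)]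
  have hsplit : Finset.Icc (-(p:ℤ)) (p:ℤ) = Finset.Icc (-(p:ℤ)) (-1) ∪ Finset.Icc 0 (p:ℤ) := by
    ext x
    simp only [Finset.mem_Icc, Finset.mem_union]
    omega
  have hdisj : Disjoint (Finset.Icc (-(p:ℤ)) (-1)) (Finset.Icc 0 (p:ℤ)) := by
    rw [Finset.disjoint_left]
    intro x hx hx'
    simp only [Finset.mem_Icc] at hx hx'
    omega
  rw [hsplit, Finset.sum_union hdisj, Icc_pos_eq, Icc_neg_eq, Finset.sum_map, Finset.sum_map]
  simp only [posEmb_apply, negEmb_apply]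
  rw [Finset.sum_congr rfl (fun a _ => colN_neg p a), Finset.sum_congr rfl (fun a _ => colN_pos p a)]
  obtain ⟨q, hq | hq⟩ := Nat.even_or_odd' p
  · -- p = 2q
    subst hq
    -- positive side
    have hpos : ∑ a ∈ Finset.range (2*q+1),
        (if 2*a ≤ 2*q then 2*(2*q-a)+1 else if 2*a = 2*q+1 then a else 0) = (q+1)*(3*q+1) := by
      rw [Finset.range_eq_Ico, ← Finset.sum_Ico_consecutive _ (show 0 ≤ q+1 by omega) (show q+1 ≤ 2*q+1 by omega)]
      have e1 : ∑ a ∈ Finset.Ico 0 (q+1),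
          (if 2*a ≤ 2*q then 2*(2*q-a)+1 else if 2*a = 2*q+1 then a else 0)
          = ∑ a ∈ Finset.range (q+1), (2*(2*q-a)+1) := by
        rw [← Finset.range_eq_Ico]
        refine Finset.sum_congr rfl fun a ha => ?_
        simp only [Finset.mem_range] at ha
        rw [if_pos (by omega)]
      have e2 : ∑ a ∈ Finset.Ico (q+1) (2*q+1),
          (if 2*a ≤ 2*q then 2*(2*q-a)+1 else if 2*a = 2*q+1 then a else 0) = 0 := by
        refine Finset.sum_eq_zero fun a ha => ?_
        simp only [Finset.mem_Ico] at ha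
        rw [if_neg (by omega), if_neg (by omega)]
      rw [e1, e2, sum_dec _ _ (by omega), add_zero]
      have : 2*(2*q)+2-(q+1) = 3*q+1 := by omega
      rw [this]
    -- negative side
    rcases Nat.eq_zero_or_pos q with hq0 | hq1
    · subst hq0
      norm_num at hpos ⊢
    · obtain ⟨r, rfl⟩ : ∃ r, q = r + 1 := ⟨q - 1, by omega⟩
      have hneg : ∑ a ∈ Finset.range (2*(r+1)),
          (if 2*a+3 ≤ 2*(r+1) then 2*((2*(r+1)-1)-a)+1 else if 2*a+2 = 2*(r+1) then a+2 else 0)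
          = r*(3*r+4) + (r+2) := by
        rw [Finset.range_eq_Ico,
          ← Finset.sum_Ico_consecutive _ (show 0 ≤ r+1 by omega) (show r+1 ≤ 2*(r+1) by omega),
          ← Finset.sum_Ico_consecutive _ (show 0 ≤ r by omega) (show r ≤ r+1 by omega)]
        have e1 : ∑ a ∈ Finset.Ico 0 r,
            (if 2*a+3 ≤ 2*(r+1) then 2*((2*(r+1)-1)-a)+1 else if 2*a+2 = 2*(r+1) then a+2 else 0)
            = ∑ a ∈ Finset.range r, (2*((2*(r+1)-1)-a)+1) := by
          rw [← Finset.range_eq_Ico]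
          refine Finset.sum_congr rfl fun a ha => ?_
          simp only [Finset.mem_range] at ha
          rw [if_pos (by omega)]
        have e2 : ∑ a ∈ Finset.Ico r (r+1),
            (if 2*a+3 ≤ 2*(r+1) then 2*((2*(r+1)-1)-a)+1 else if 2*a+2 = 2*(r+1) then a+2 else 0)
            = r+2 := by
          have hs : Finset.Ico r (r+1) = {r} := by
            ext a
            simp only [Finset.mem_Ico, Finset.mem_singleton]
            omega
          rw [hs, Finset.sum_singleton, if_neg (by omega), if_pos (by omega)]
        have e3 : ∑ a ∈ Finset.Ico (r+1) (2*(r+1)),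
            (if 2*a+3 ≤ 2*(r+1) then 2*((2*(r+1)-1)-a)+1 else if 2*a+2 = 2*(r+1) then a+2 else 0)
            = 0 := by
          refine Finset.sum_eq_zero fun a ha => ?_
          simp only [Finset.mem_Ico] at ha
          rw [if_neg (by omega), if_neg (by omega)]
        rw [e1, e2, e3, add_zero, sum_dec _ _ (by omega)]
        have : 2*(2*(r+1)-1)+2-r = 3*r+4 := by omega
        rw [this]
      rw [hpos, hneg]
      have hdiv : 3*(2*(r+1))*(2*(r+1)+1)/2 = 3*(r+1)*(2*r+3) := by
        have h2 : 3*(2*(r+1))*(2*(r+1)+1) = (3*(r+1)*(2*r+3))*2 := by ring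
        rw [h2, Nat.mul_div_cancel _ two_pos]
      rw [hdiv]
      ring
  · -- p = 2q+1
    subst hq
    have hpos : ∑ a ∈ Finset.range (2*q+1+1),
        (if 2*a ≤ 2*q+1 then 2*((2*q+1)-a)+1 else if 2*a = (2*q+1)+1 then a else 0)
        = (q+1)*(3*q+3) + (q+1) := by
      rw [Finset.range_eq_Ico,
        ← Finset.sum_Ico_consecutive _ (show 0 ≤ q+2 by omega) (show q+2 ≤ 2*q+1+1 by omega),
        ← Finset.sum_Ico_consecutive _ (show 0 ≤ q+1 by omega) (show q+1 ≤ q+2 by omega)]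
      have e1 : ∑ a ∈ Finset.Ico 0 (q+1),
          (if 2*a ≤ 2*q+1 then 2*((2*q+1)-a)+1 else if 2*a = (2*q+1)+1 then a else 0)
          = ∑ a ∈ Finset.range (q+1), (2*((2*q+1)-a)+1) := by
        rw [← Finset.range_eq_Ico]
        refine Finset.sum_congr rfl fun a ha => ?_
        simp only [Finset.mem_range] at ha
        rw [if_pos (by omega)]
      have e2 : ∑ a ∈ Finset.Ico (q+1) (q+2),
          (if 2*a ≤ 2*q+1 then 2*((2*q+1)-a)+1 else if 2*a = (2*q+1)+1 then a else 0)
          = q+1 := by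
        have hs : Finset.Ico (q+1) (q+2) = {q+1} := by
          ext a
          simp only [Finset.mem_Ico, Finset.mem_singleton]
          omega
        rw [hs, Finset.sum_singleton, if_neg (by omega), if_pos (by omega)]
      have e3 : ∑ a ∈ Finset.Ico (q+2) (2*q+1+1),
          (if 2*a ≤ 2*q+1 then 2*((2*q+1)-a)+1 else if 2*a = (2*q+1)+1 then a else 0)
          = 0 := by
        refine Finset.sum_eq_zero fun a ha => ?_
        simp only [Finset.mem_Ico] at ha
        rw [if_neg (by omega), if_neg (by omega)]
      rw [e1, e2, e3, add_zero, sum_dec _ _ (by omega)]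
      have : 2*(2*q+1)+2-(q+1) = 3*q+3 := by omega
      rw [this]
    have hneg : ∑ a ∈ Finset.range (2*q+1),
        (if 2*a+3 ≤ 2*q+1 then 2*((2*q+1-1)-a)+1 else if 2*a+2 = 2*q+1 then a+2 else 0)
        = q*(3*q+2) := by
      rw [Finset.range_eq_Ico,
        ← Finset.sum_Ico_consecutive _ (show 0 ≤ q by omega) (show q ≤ 2*q+1 by omega)]
      have e1 : ∑ a ∈ Finset.Ico 0 q,
          (if 2*a+3 ≤ 2*q+1 then 2*((2*q+1-1)-a)+1 else if 2*a+2 = 2*q+1 then a+2 else 0)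
          = ∑ a ∈ Finset.range q, (2*((2*q+1-1)-a)+1) := by
        rw [← Finset.range_eq_Ico]
        refine Finset.sum_congr rfl fun a ha => ?_
        simp only [Finset.mem_range] at ha
        rw [if_pos (by omega)]
      have e2 : ∑ a ∈ Finset.Ico q (2*q+1),
          (if 2*a+3 ≤ 2*q+1 then 2*((2*q+1-1)-a)+1 else if 2*a+2 = 2*q+1 then a+2 else 0)
          = 0 := by
        refine Finset.sum_eq_zero fun a ha => ?_
        simp only [Finset.mem_Ico] at ha
        rw [if_neg (by omega), if_neg (by omega)]
      rw [e1, e2, add_zero, sum_dec _ _ (by omega)]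
      have : 2*(2*q+1-1)+2-q = 3*q+2 := by omega
      rw [this]
    rw [hpos, hneg]
    have hdiv : 3*(2*q+1)*(2*q+1+1)/2 = 3*(2*q+1)*(q+1) := by
      have h2 : 3*(2*q+1)*(2*q+1+1) = (3*(2*q+1)*(q+1))*2 := by ring
      rw [h2, Nat.mul_div_cancel _ two_pos]
    rw [hdiv]
    ring

/-! ### reduction of an arbitrary center to the origin -/

lemma hexD_shift (x v : ℤ × ℤ) (hx : (x.1 + x.2) % 2 = 0) :
    hexD x v = hexD 0 (v.1 - x.1, v.2 - x.2) := by
  obtain ⟨x1, x2⟩ := x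
  obtain ⟨v1, v2⟩ := v
  simp only [hexD, hexT, Prod.fst_zero, Prod.snd_zero] at *
  split_ifs <;> omega

lemma hexD_flip (x v : ℤ × ℤ) (hx : (x.1 + x.2) % 2 = 1) :
    hexD x v = hexD 0 (x.1 - v.1, v.2 - x.2) := by
  obtain ⟨x1, x2⟩ := x
  obtain ⟨v1, v2⟩ := v
  simp only [hexD, hexT, Prod.fst_zero, Prod.snd_zero] at *
  split_ifs <;> omega

def shiftE (x : ℤ × ℤ) : (ℤ × ℤ) ≃ (ℤ × ℤ) where
  toFun v := (v.1 - x.1, v.2 - x.2)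
  invFun w := (w.1 + x.1, w.2 + x.2)
  left_inv v := by apply Prod.ext <;> dsimp <;> omega
  right_inv w := by apply Prod.ext <;> dsimp <;> omega

def flipE (x : ℤ × ℤ) : (ℤ × ℤ) ≃ (ℤ × ℤ) where
  toFun v := (x.1 - v.1, v.2 - x.2)
  invFun w := (x.1 - w.1, w.2 + x.2)
  left_inv v := by apply Prod.ext <;> dsimp <;> omega
  right_inv w := by apply Prod.ext <;> dsimp <;> omega

/-- For every vertex `x` of `T_H` and every `p ≥ 0`, the closed ball `B(x,p)` contains
exactly `1 + 3p(p+1)/2` vertices. -/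
theorem card_ball (x : ℤ × ℤ) (p : ℕ) :
    {u : ℤ × ℤ | TH.dist x u ≤ p}.encard = ((1 + 3*p*(p+1)/2 : ℕ) : ℕ∞) := by
  have hset : {u : ℤ × ℤ | TH.dist x u ≤ p} = {u : ℤ × ℤ | hexD x u ≤ (p:ℤ)} := by
    ext u
    simp only [Set.mem_setOf_eq]
    rw [show (hexD x u ≤ (p:ℤ)) ↔ ((TH.dist x u : ℤ) ≤ (p:ℤ)) by rw [TH_dist_eq]]
    exact_mod_cast Iff.rfl
  rw [hset]
  by_cases hpar : (x.1 + x.2) % 2 = 0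
  · have h1 : {u : ℤ × ℤ | hexD x u ≤ (p:ℤ)} = (shiftE x) ⁻¹' {w | hexD 0 w ≤ (p:ℤ)} := by
      ext u
      simp only [Set.mem_preimage, Set.mem_setOf_eq, shiftE, Equiv.coe_fn_mk]
      rw [hexD_shift x u hpar]
    rw [h1, ← Equiv.image_symm_eq_preimage,
      Set.InjOn.encard_image ((shiftE x).symm.injective.injOn),
      ball0_eq p, Set.encard_coe_eq_coe_finsetCard, ballF_card]
  · have hpar1 : (x.1 + x.2) % 2 = 1 := by omega
    have h1 : {u : ℤ × ℤ | hexD x u ≤ (p:ℤ)} = (flipE x) ⁻¹' {w | hexD 0 w ≤ (p:ℤ)} := by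
      ext u
      simp only [Set.mem_preimage, Set.mem_setOf_eq, flipE, Equiv.coe_fn_mk]
      rw [hexD_flip x u hpar1]
    rw [h1, ← Equiv.image_symm_eq_preimage,
      Set.InjOn.encard_image ((flipE x).symm.injective.injOn),
      ball0_eq p, Set.encard_coe_eq_coe_finsetCard, ballF_card]
end

section
/- Let v₁ = (i₁,j₁) and v₂ = (i₂,j₂) be vertices of the infinite hexagonal grid T_H with i₁ ≤ i₂, and let τ(i,j) = (i+j) mod 2. Then the graph distance satisfies: d(v₁,v₂) = |i₁−i₂| + |j₁−j₂| if |i₁−i₂| ≤ |j₁−j₂|, and d(v₁,v₂) = 2(i₂−i₁) + τ(v₁) − τ(v₂) if |i₁−i₂| > |j₁−j₂|. -/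
lemma TH_adj (u v : ℤ × ℤ) : TH.Adj u v ↔
    (u.1 = v.1 ∧ (v.2 = u.2 + 1 ∨ u.2 = v.2 + 1)) ∨
    (u.2 = v.2 ∧ ((v.1 = u.1 + 1 ∧ (u.1 + u.2) % 2 = 0) ∨
                  (u.1 = v.1 + 1 ∧ (v.1 + v.2) % 2 = 0))) := Iff.rfl

def phiH (u : ℤ × ℤ) : ℤ := 2 * u.1 - (u.1 + u.2) % 2

def tfun (u v : ℤ × ℤ) : ℤ :=
  max (max (u.1 - v.1) (v.1 - u.1) + max (u.2 - v.2) (v.2 - u.2))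
      (max (phiH u - phiH v) (phiH v - phiH u))

lemma tfun_nonneg (u v : ℤ × ℤ) : 0 ≤ tfun u v := by
  simp only [tfun, phiH]; omega

lemma tfun_pos (u v : ℤ × ℤ) (h : u ≠ v) : 1 ≤ tfun u v := by
  have : u.1 ≠ v.1 ∨ u.2 ≠ v.2 := by
    by_contra hc; push_neg at hc; exact h (Prod.ext hc.1 hc.2)
  simp only [tfun, phiH]; omega

lemma step (u v : ℤ × ℤ) (h : u ≠ v) :
    ∃ u' : ℤ × ℤ, TH.Adj u u' ∧ tfun u' v + 1 ≤ tfun u v := by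
  obtain ⟨i1, j1⟩ := u
  obtain ⟨i2, j2⟩ := v
  have hne : i1 ≠ i2 ∨ j1 ≠ j2 := by
    by_contra hc; push_neg at hc; exact h (Prod.ext hc.1 hc.2)
  by_cases h1 : i1 < i2 ∧ (i1 + j1) % 2 = 0
  · exact ⟨(i1 + 1, j1), by rw [TH_adj]; simp; omega, by simp [tfun, phiH]; omega⟩
  by_cases h2 : i2 < i1 ∧ (i1 + j1) % 2 = 1
  · exact ⟨(i1 - 1, j1), by rw [TH_adj]; simp; omega, by simp [tfun, phiH]; omega⟩
  by_cases h3 : j1 < j2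
  · exact ⟨(i1, j1 + 1), by rw [TH_adj]; simp, by simp [tfun, phiH]; omega⟩
  by_cases h4 : j2 < j1
  · exact ⟨(i1, j1 - 1), by rw [TH_adj]; simp, by simp [tfun, phiH]; omega⟩
  -- j1 = j2, horizontal blocked: move up
  · exact ⟨(i1, j1 + 1), by rw [TH_adj]; simp, by simp [tfun, phiH]; omega⟩

lemma exists_walk_s6 (n : ℕ) : ∀ u v : ℤ × ℤ, tfun u v ≤ n →
    ∃ p : TH.Walk u v, (p.length : ℤ) ≤ tfun u v := by
  induction n with
  | zero =>
    intro u v hle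
    have : u = v := by
      by_contra hne
      have := tfun_pos u v hne
      omega
    subst this
    exact ⟨SimpleGraph.Walk.nil, by simpa using tfun_nonneg u u⟩
  | succ n ih =>
    intro u v hle
    by_cases hne : u = v
    · subst hne
      exact ⟨SimpleGraph.Walk.nil, by simpa using tfun_nonneg u u⟩
    · obtain ⟨u', hadj, hlt⟩ := step u v hne
      obtain ⟨p, hp⟩ := ih u' v (by omega)
      refine ⟨SimpleGraph.Walk.cons hadj p, ?_⟩
      simp only [SimpleGraph.Walk.length_cons]
      push_cast
      omega

set_option maxHeartbeats 1000000 in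
lemma adj_tfun {u u' : ℤ × ℤ} (v : ℤ × ℤ) (h : TH.Adj u u') :
    tfun u v ≤ tfun u' v + 1 := by
  obtain ⟨a, b⟩ := u
  obtain ⟨c, d⟩ := u'
  obtain ⟨e, f⟩ := v
  rw [TH_adj] at h
  simp only [tfun, phiH] at h ⊢
  omega

lemma walk_lower {u v : ℤ × ℤ} (p : TH.Walk u v) : tfun u v ≤ p.length := by
  induction p with
  | nil => simp only [tfun, phiH]; simp
  | cons hadj p ih =>
    simp only [SimpleGraph.Walk.length_cons]
    rename_i x y z
    have := adj_tfun (u := x) (u' := y) z hadj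
    push_cast
    omega

lemma dist_eq (u v : ℤ × ℤ) : (TH.dist u v : ℤ) = tfun u v := by
  obtain ⟨p, hp⟩ := exists_walk_s6 (tfun u v).toNat u v
    (by rw [Int.toNat_of_nonneg (tfun_nonneg u v)])
  have h1 : (TH.dist u v : ℤ) ≤ tfun u v := by
    have := SimpleGraph.dist_le p
    have : (TH.dist u v : ℤ) ≤ (p.length : ℤ) := by exact_mod_cast this
    omega
  have hr : TH.Reachable u v := ⟨p⟩
  obtain ⟨q, hq⟩ := hr.exists_walk_length_eq_dist
  have h2 : tfun u v ≤ (TH.dist u v : ℤ) := by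
    have := walk_lower q
    rw [hq] at this
    exact_mod_cast this
  omega


/-- Distance formula in `T_H`, where `τ(i,j) = (i+j) mod 2`. -/
theorem dist_formula (i₁ j₁ i₂ j₂ : ℤ) (h : i₁ ≤ i₂) :
    (|i₁ - i₂| ≤ |j₁ - j₂| →
      (TH.dist (i₁, j₁) (i₂, j₂) : ℤ) = |i₁ - i₂| + |j₁ - j₂|) ∧
    (|i₁ - i₂| > |j₁ - j₂| →
      (TH.dist (i₁, j₁) (i₂, j₂) : ℤ) = 2*(i₂ - i₁) + (i₁ + j₁) % 2 - (i₂ + j₂) % 2) := by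
  rw [dist_eq]
  simp only [tfun, phiH]
  rcases abs_cases (i₁ - i₂) with ⟨ha1, ha2⟩ | ⟨ha1, ha2⟩ <;>
    rcases abs_cases (j₁ - j₂) with ⟨hb1, hb2⟩ | ⟨hb1, hb2⟩ <;>
    constructor <;> intro hyp <;> omega
end

section
/- Let x = (i,j) be a right vertex of the infinite hexagonal grid T_H, let p ≥ 5 be an integer, and let f be a 2p-distance coloring of T_H. If the color f((i,j+p)) of the corner vertex (i,j+p) of F_{x,p} is assigned to two distinct vertices of F_{x,p+1}, then those two vertices are the corner vertices (i+⌈(p+1)/2⌉, j−⌊(p+1)/2⌋) and (i−⌊(p+1)/2⌋, j−⌈(p+1)/2⌉) of F_{x,p+1}. -/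
namespace THcorner

def pot (v : ℤ × ℤ) : ℤ := 2 * v.1 - (v.1 + v.2) % 2

def fm (u v : ℤ × ℤ) : ℕ :=
  max ((u.1 - v.1).natAbs + (u.2 - v.2).natAbs) (pot u - pot v).natAbs

lemma adj_def (u v : ℤ × ℤ) : TH.Adj u v ↔
    ((u.1 = v.1 ∧ (v.2 = u.2 + 1 ∨ u.2 = v.2 + 1)) ∨
    (u.2 = v.2 ∧ ((v.1 = u.1 + 1 ∧ (u.1 + u.2) % 2 = 0) ∨
                  (u.1 = v.1 + 1 ∧ (v.1 + v.2) % 2 = 0)))) := Iff.rfl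

lemma fm_self (u : ℤ × ℤ) : fm u u = 0 := by simp [fm, pot]

lemma eq_of_fm_eq_zero {u v : ℤ × ℤ} (h : fm u v = 0) : u = v := by
  obtain ⟨a, b⟩ := u; obtain ⟨c, d⟩ := v
  simp only [fm, pot, Prod.mk.injEq] at *
  omega

lemma fm_adj {u v : ℤ × ℤ} (h : TH.Adj u v) : fm u v ≤ 1 := by
  rw [adj_def] at h
  obtain ⟨a, b⟩ := u; obtain ⟨c, d⟩ := v
  simp only at h
  refine max_le ?_ ?_
  · simp only; omega
  · simp only [pot]; omega

lemma fm_triangle (u w v : ℤ × ℤ) : fm u v ≤ fm u w + fm w v := by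
  have hA : (u.1 - v.1).natAbs + (u.2 - v.2).natAbs ≤
      ((u.1 - w.1).natAbs + (u.2 - w.2).natAbs) + ((w.1 - v.1).natAbs + (w.2 - v.2).natAbs) := by
    omega
  have hB : (pot u - pot v).natAbs ≤ (pot u - pot w).natAbs + (pot w - pot v).natAbs := by
    omega
  simp only [fm]
  omega

lemma fm_le_walk {u v : ℤ × ℤ} (w : TH.Walk u v) : fm u v ≤ w.length := by
  induction w with
  | nil => simp [fm_self]
  | @cons u w v h q ih =>
    have h1 := fm_adj h
    have h2 := fm_triangle u w v
    rw [SimpleGraph.Walk.length_cons]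
    omega

lemma max_key {M' P' M P : ℕ} (h1 : M' + 1 ≤ max M P) (h2 : P' + 1 ≤ max M P) :
    max M' P' + 1 ≤ max M P := by omega

lemma step {u v : ℤ × ℤ} (h : u ≠ v) : ∃ w, TH.Adj u w ∧ fm w v + 1 ≤ fm u v := by
  obtain ⟨a, b⟩ := u; obtain ⟨c, d⟩ := v
  have hne : ¬(a = c ∧ b = d) := by simpa [Prod.mk.injEq] using h
  by_cases h1 : a < c ∧ (a + b) % 2 = 0
  · refine ⟨(a + 1, b), by rw [adj_def]; dsimp only; omega, max_key ?_ ?_⟩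
    · show (a + 1 - c).natAbs + (b - d).natAbs + 1 ≤ _; simp only [pot]; omega
    · show (pot (a+1, b) - pot (c, d)).natAbs + 1 ≤ _; simp only [pot]; omega
  by_cases h2 : c < a ∧ (a + b) % 2 = 1
  · refine ⟨(a - 1, b), by rw [adj_def]; dsimp only; omega, max_key ?_ ?_⟩
    · show (a - 1 - c).natAbs + (b - d).natAbs + 1 ≤ _; simp only [pot]; omega
    · show (pot (a-1, b) - pot (c, d)).natAbs + 1 ≤ _; simp only [pot]; omega
  by_cases h3 : b < d
  · refine ⟨(a, b + 1), by rw [adj_def]; dsimp only; omega, max_key ?_ ?_⟩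
    · show (a - c).natAbs + (b + 1 - d).natAbs + 1 ≤ _; simp only [pot]; omega
    · show (pot (a, b+1) - pot (c, d)).natAbs + 1 ≤ _; simp only [pot]; omega
  by_cases h4 : d < b
  · refine ⟨(a, b - 1), by rw [adj_def]; dsimp only; omega, max_key ?_ ?_⟩
    · show (a - c).natAbs + (b - 1 - d).natAbs + 1 ≤ _; simp only [pot]; omega
    · show (pot (a, b-1) - pot (c, d)).natAbs + 1 ≤ _; simp only [pot]; omega
  · refine ⟨(a, b + 1), by rw [adj_def]; dsimp only; omega, max_key ?_ ?_⟩
    · show (a - c).natAbs + (b + 1 - d).natAbs + 1 ≤ _; simp only [pot]; omega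
    · show (pot (a, b+1) - pot (c, d)).natAbs + 1 ≤ _; simp only [pot]; omega

lemma exists_walk : ∀ (n : ℕ) (u v : ℤ × ℤ), fm u v ≤ n → ∃ w : TH.Walk u v, w.length ≤ n := by
  intro n
  induction n with
  | zero =>
    intro u v h
    have := eq_of_fm_eq_zero (Nat.le_zero.mp h)
    subst this
    exact ⟨.nil, by simp⟩
  | succ n ih =>
    intro u v h
    by_cases he : u = v
    · subst he; exact ⟨.nil, by simp⟩
    · obtain ⟨w, hadj, hlt⟩ := step he
      obtain ⟨q, hq⟩ := ih w v (by omega)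
      exact ⟨.cons hadj q, by rw [SimpleGraph.Walk.length_cons]; omega⟩

lemma dist_eq (u v : ℤ × ℤ) : TH.dist u v = fm u v := by
  obtain ⟨w, hw⟩ := exists_walk (fm u v) u v le_rfl
  have h1 : TH.dist u v ≤ fm u v := le_trans (SimpleGraph.dist_le w) hw
  by_cases hz : TH.dist u v = 0
  · have huv : u = v := by
      rcases SimpleGraph.dist_eq_zero_iff_eq_or_not_reachable.mp hz with h | h
      · exact h
      · exact absurd ⟨w⟩ h
    subst huv; rw [fm_self, hz]
  · obtain ⟨q, hq⟩ := SimpleGraph.exists_walk_of_dist_ne_zero hz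
    have := fm_le_walk q
    omega

end THcorner
set_option maxHeartbeats 1600000 in

/-- If the color of the corner vertex `(i, j+p)` of `F_{x,p}` is reused at two distinct
vertices of `F_{x,p+1}`, then those two vertices are the corner vertices
`(i+⌈(p+1)/2⌉, j-⌊(p+1)/2⌋)` and `(i-⌊(p+1)/2⌋, j-⌈(p+1)/2⌉)` of `F_{x,p+1}`. -/
theorem corner_double_reuse_forced (i j : ℤ) (hx : (i + j) % 2 = 0) (p : ℕ) (hp : 5 ≤ p)
    (f : ℤ × ℤ → ℕ) (hf : IsDistColoring (2*p) f)
    (u₁ u₂ : ℤ × ℤ) (hne : u₁ ≠ u₂)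
    (hd₁ : TH.dist (i, j) u₁ = p + 1) (hd₂ : TH.dist (i, j) u₂ = p + 1)
    (hc₁ : f u₁ = f (i, j + (p : ℤ))) (hc₂ : f u₂ = f (i, j + (p : ℤ))) :
    (u₁ = (i + ((p+2)/2 : ℕ), j - ((p+1)/2 : ℕ)) ∧
     u₂ = (i - ((p+1)/2 : ℕ), j - ((p+2)/2 : ℕ))) ∨
    (u₂ = (i + ((p+2)/2 : ℕ), j - ((p+1)/2 : ℕ)) ∧
     u₁ = (i - ((p+1)/2 : ℕ), j - ((p+2)/2 : ℕ))) := by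
  have hdc : TH.dist (i, j) (i, j + (p : ℤ)) = p := by
    rw [THcorner.dist_eq]
    simp only [THcorner.fm, THcorner.pot]
    omega
  have hne₁ : u₁ ≠ (i, j + (p : ℤ)) := by
    intro h; rw [h, hdc] at hd₁; omega
  have hne₂ : u₂ ≠ (i, j + (p : ℤ)) := by
    intro h; rw [h, hdc] at hd₂; omega
  have h3 : 2 * p < TH.dist u₁ (i, j + (p : ℤ)) := by
    by_contra hle; push_neg at hle; exact hf u₁ _ hne₁ hle hc₁
  have h4 : 2 * p < TH.dist u₂ (i, j + (p : ℤ)) := by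
    by_contra hle; push_neg at hle; exact hf u₂ _ hne₂ hle hc₂
  have h5 : 2 * p < TH.dist u₁ u₂ := by
    by_contra hle; push_neg at hle; exact hf u₁ u₂ hne hle (hc₁.trans hc₂.symm)
  clear hf hc₁ hc₂ hne hne₁ hne₂ hdc
  rw [THcorner.dist_eq] at hd₁ hd₂ h3 h4 h5
  obtain ⟨a₁, b₁⟩ := u₁; obtain ⟨a₂, b₂⟩ := u₂
  simp only [THcorner.fm, THcorner.pot] at hd₁ hd₂ h3 h4 h5
  -- sphere bounds
  have s1a : (i - a₁).natAbs + (j - b₁).natAbs ≤ p + 1 := by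
    clear hd₂ h3 h4 h5; omega
  have s1b : (2*i - (i+j) % 2 - (2*a₁ - (a₁+b₁) % 2)).natAbs ≤ p + 1 := by
    clear hd₂ h3 h4 h5 s1a; omega
  have s2a : (i - a₂).natAbs + (j - b₂).natAbs ≤ p + 1 := by
    clear hd₁ h3 h4 h5 s1a s1b; omega
  have s2b : (2*i - (i+j) % 2 - (2*a₂ - (a₂+b₂) % 2)).natAbs ≤ p + 1 := by
    clear hd₁ h3 h4 h5 s1a s1b s2a; omega
  -- the pot-term of dist to corner is small, so the L1 term is large
  have g1 : 2*p < (a₁ - i).natAbs + (b₁ - (j + p)).natAbs := by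
    clear hd₁ hd₂ h4 h5 s1a s2a s2b; omega
  have g2 : 2*p < (a₂ - i).natAbs + (b₂ - (j + p)).natAbs := by
    clear hd₁ hd₂ h3 h5 s1a s1b s2a g1; omega
  clear h3 h4 hd₁ hd₂
  -- forced on lower-left/lower-right boundary
  have c1 : b₁ - j = ((a₁ - i).natAbs : ℤ) - (p+1) := by
    clear h5 s1b s2a s2b g2; omega
  have c2 : b₂ - j = ((a₂ - i).natAbs : ℤ) - (p+1) := by
    clear h5 s1a s1b s2b g1 c1; omega
  clear g1 g2 s1a s2a
  -- L1 distance between the two reuse points is small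
  have m12 : (a₁ - a₂).natAbs + (b₁ - b₂).natAbs ≤ p + 2 := by
    clear h5; omega
  -- hence the pot gap is large
  have psi12 : 2*p < (2*a₁ - (a₁+b₁) % 2 - (2*a₂ - (a₂+b₂) % 2)).natAbs := by
    clear s1b s2b c1 c2; omega
  -- parity of both points agrees
  have par12 : (a₁ + b₁) % 2 = (a₂ + b₂) % 2 := by
    clear h5 s1b s2b m12 psi12; omega
  have td : p + 1 ≤ (a₁ - a₂).natAbs := by
    clear h5 s1b s2b c1 c2 m12; omega
  clear h5 m12 psi12
  have v1 : (2*(a₁ - i) = p + 1 + (a₁+b₁) % 2 ∧ 2*(a₂ - i) = -(p+1) + (a₁+b₁) % 2) ∨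
      (2*(a₂ - i) = p + 1 + (a₁+b₁) % 2 ∧ 2*(a₁ - i) = -(p+1) + (a₁+b₁) % 2) := by
    clear c1 c2 hp; omega
  clear td s1b s2b par12
  simp only [Prod.mk.injEq]
  rcases v1 with ⟨v1a, v1b⟩ | ⟨v1a, v1b⟩
  · refine Or.inl ⟨⟨?_, ?_⟩, ?_, ?_⟩
    · clear c1 c2; omega
    · clear c2; omega
    · clear c1 c2; omega
    · clear c1; omega
  · refine Or.inr ⟨⟨?_, ?_⟩, ?_, ?_⟩
    · clear c1 c2; omega
    · clear c1; omega
    · clear c1 c2; omega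
    · clear c2; omega
end
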